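/- Let E and F be GTESs over a signature Σ. Then R⟨E,F⟩ and R⟨F,E⟩ together simulate R⟨E∪F,∅⟩ if and only if for every constant a ∈ C⟨E∪F,∅⟩ at least one of the following two conditions holds: (1) a ∈ C⟨E,F⟩ and for every b ∈ C⟨E∪F,∅⟩, if there is a path of positive length or a cycle from a to b in AUX[E;F] then R⟨E,F⟩ keeps up with R⟨E∪F,∅⟩ writing b; (2) a ∈ C⟨F,E⟩ and for every b ∈ C⟨E∪F,∅⟩, if there is a path of positive length or a cycle from a to b in AUX[E;F] then R⟨F,E⟩ keeps up with R⟨E∪F,∅⟩ writing b. -/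

import Mathlib

inductive GTerm (S : Type) (ar : S → ℕ) : Type
  | node (σ : S) (args : Fin (ar σ) → GTerm S ar) : GTerm S ar

/-- The congruence on the ground term algebra generated by a set of equations `E`:
the smallest equivalence relation containing `E` and compatible with all operations. -/
inductive EqCong {S : Type} {ar : S → ℕ} (E : Set (GTerm S ar × GTerm S ar)) :
    GTerm S ar → GTerm S ar → Prop
  | base {s t : GTerm S ar} : (s, t) ∈ E → EqCong E s t
  | refl (t : GTerm S ar) : EqCong E t t
  | symm {s t : GTerm S ar} : EqCong E s t → EqCong E t s
  | trans {s t u : GTerm S ar} : EqCong E s t → EqCong E t u → EqCong E s u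
  | lift {σ : S} {f g : Fin (ar σ) → GTerm S ar} :
      (∀ i, EqCong E (f i) (g i)) → EqCong E (GTerm.node σ f) (GTerm.node σ g)

/-- A congruence on the ground term algebra: an equivalence relation compatible
with all operations. -/
def IsTermCongruence {S : Type} {ar : S → ℕ} (r : GTerm S ar → GTerm S ar → Prop) : Prop :=
  Equivalence r ∧
    ∀ (σ : S) (f g : Fin (ar σ) → GTerm S ar),
      (∀ i, r (f i) (g i)) → r (GTerm.node σ f) (GTerm.node σ g)

/-- `Subterm s t` : `s` is a subterm of `t`. -/
inductive Subterm {S : Type} {ar : S → ℕ} : GTerm S ar → GTerm S ar → Prop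
  | refl (t : GTerm S ar) : Subterm t t
  | node {s : GTerm S ar} {σ : S} {f : Fin (ar σ) → GTerm S ar} (i : Fin (ar σ)) :
      Subterm s (f i) → Subterm s (GTerm.node σ f)

/-- `ST E` : the set of all subterms of sides of equations of `E`. -/
def STSet {S : Type} {ar : S → ℕ} (E : Set (GTerm S ar × GTerm S ar)) : Set (GTerm S ar) :=
  {t | ∃ p ∈ E, Subterm t p.1 ∨ Subterm t p.2}

/-- The `Θ⟨G⟩`-class of `t` inside `W`. -/
def thCls {S : Type} {ar : S → ℕ} (G : Set (GTerm S ar × GTerm S ar))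
    (W : Set (GTerm S ar)) (t : GTerm S ar) : Set (GTerm S ar) :=
  {u | u ∈ W ∧ EqCong G t u}

/-- `Θ⟨G⟩` as a set of pairs: the restriction of the generated congruence to `W × W`. -/
def Theta {S : Type} {ar : S → ℕ} (G : Set (GTerm S ar × GTerm S ar))
    (W : Set (GTerm S ar)) : Set (GTerm S ar × GTerm S ar) :=
  {p | p.1 ∈ W ∧ p.2 ∈ W ∧ EqCong G p.1 p.2}

/-- `C⟨G⟩` : the set of `Θ⟨G⟩`-classes of elements of `W`, viewed as new constants. -/
def CCl {S : Type} {ar : S → ℕ} (G : Set (GTerm S ar × GTerm S ar))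
    (W : Set (GTerm S ar)) : Set (Set (GTerm S ar)) :=
  {A | ∃ t ∈ W, A = thCls G W t}

/-- Terms over the signature extended with a type `C` of new constants. -/
inductive XTerm (S : Type) (ar : S → ℕ) (C : Type) : Type
  | const (c : C) : XTerm S ar C
  | node (σ : S) (args : Fin (ar σ) → XTerm S ar C) : XTerm S ar C

abbrev XRule (S : Type) (ar : S → ℕ) (C : Type) : Type :=
  XTerm S ar C × XTerm S ar C

/-- Embedding of ground terms over `Σ` into the extended terms. -/
def GTerm.toX {S : Type} {ar : S → ℕ} {C : Type} : GTerm S ar → XTerm S ar C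
  | .node σ f => .node σ (fun i => (f i).toX)

/-- The GTRS `R⟨G⟩` (relative to the subterm set `W`): its rules are exactly
`σ(t₁/Θ⟨G⟩, …, t_m/Θ⟨G⟩) → σ(t₁,…,t_m)/Θ⟨G⟩` for `σ(t₁,…,t_m) ∈ W`. -/
def RRsys {S : Type} {ar : S → ℕ} (G : Set (GTerm S ar × GTerm S ar))
    (W : Set (GTerm S ar)) : Set (XRule S ar (Set (GTerm S ar))) :=
  {r | ∃ (σ : S) (ts : Fin (ar σ) → GTerm S ar),
      GTerm.node σ ts ∈ W ∧
      r = (XTerm.node σ (fun i => XTerm.const (thCls G W (ts i))),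
           XTerm.const (thCls G W (GTerm.node σ ts)))}

/-- One-step rewriting by a GTRS `R`. -/
inductive Rew {S : Type} {ar : S → ℕ} {C : Type} (R : Set (XRule S ar C)) :
    XTerm S ar C → XTerm S ar C → Prop
  | rule {l r : XTerm S ar C} : (l, r) ∈ R → Rew R l r
  | node {σ : S} {f g : Fin (ar σ) → XTerm S ar C} (i : Fin (ar σ)) :
      Rew R (f i) (g i) → (∀ j, j ≠ i → f j = g j) →
      Rew R (XTerm.node σ f) (XTerm.node σ g)

/-- `→*_R` : reflexive–transitive closure of one-step rewriting. -/
def RewStar {S : Type} {ar : S → ℕ} {C : Type} (R : Set (XRule S ar C)) :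
    XTerm S ar C → XTerm S ar C → Prop :=
  Relation.ReflTransGen (Rew R)

/-- A GTRS is total (w.r.t. a set `Cst` of constants) if every `σ(a₁,…,a_m)` with
`a₁,…,a_m ∈ Cst` is the left-hand side of some rule. -/
def TotalR {S : Type} {ar : S → ℕ} (R : Set (XRule S ar (Set (GTerm S ar))))
    (Cst : Set (Set (GTerm S ar))) : Prop :=
  ∀ (σ : S) (av : Fin (ar σ) → Set (GTerm S ar)), (∀ i, av i ∈ Cst) →
    ∃ rhs, (XTerm.node σ (fun i => XTerm.const (av i)), rhs) ∈ R

/-- An extended term containing no new constants, i.e. a ground term over `Σ`. -/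
def IsGroundX {S : Type} {ar : S → ℕ} {C : Type} (t : XTerm S ar C) : Prop :=
  ∃ s : GTerm S ar, GTerm.toX s = t

/-- `ProperExt b t` : `t = δ[b]` for some one-hole context `δ` over `Σ`
different from the hole itself. -/
inductive ProperExt {S : Type} {ar : S → ℕ} {C : Type} (b : XTerm S ar C) :
    XTerm S ar C → Prop
  | base {σ : S} {f : Fin (ar σ) → XTerm S ar C} (i : Fin (ar σ)) :
      f i = b → (∀ j, j ≠ i → IsGroundX (f j)) → ProperExt b (XTerm.node σ f)
  | step {σ : S} {f : Fin (ar σ) → XTerm S ar C} (i : Fin (ar σ)) :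
      ProperExt b (f i) → (∀ j, j ≠ i → IsGroundX (f j)) → ProperExt b (XTerm.node σ f)

/-- `R` reaches the constant `a` from a proper extension of the constant `b`. -/
def ReachesPE {S : Type} {ar : S → ℕ} (R : Set (XRule S ar (Set (GTerm S ar))))
    (a b : Set (GTerm S ar)) : Prop :=
  ∃ t, ProperExt (XTerm.const b) t ∧ RewStar R t (XTerm.const a)

/-- The arc relation `A[E;F]` of the auxiliary directed graph: `(a,b)` is an arc iff some
rule `σ(a₁,…,a_m) → a` of `R` has `b = aᵢ` for some `i`. -/
def AuxArc {S : Type} {ar : S → ℕ} (R : Set (XRule S ar (Set (GTerm S ar))))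
    (a b : Set (GTerm S ar)) : Prop :=
  ∃ (σ : S) (av : Fin (ar σ) → Set (GTerm S ar)) (i : Fin (ar σ)),
    (XTerm.node σ (fun j => XTerm.const (av j)), XTerm.const a) ∈ R ∧ av i = b

/-- `R1` keeps up with `Rall` writing the constant `a`. -/
def KeepsUp {S : Type} {ar : S → ℕ}
    (R1 Rall : Set (XRule S ar (Set (GTerm S ar))))
    (C1 : Set (Set (GTerm S ar))) (a : Set (GTerm S ar)) : Prop :=
  ∀ (σ : S) (av : Fin (ar σ) → Set (GTerm S ar)),
    (XTerm.node σ (fun i => XTerm.const (av i)), XTerm.const a) ∈ Rall →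
    ∀ bv : Fin (ar σ) → Set (GTerm S ar),
      (∀ i, bv i ∈ C1) → (∀ i, bv i ⊆ av i) →
      ∃ rhs, (XTerm.node σ (fun i => XTerm.const (bv i)), rhs) ∈ R1

/-- `R1` (with constant set `C1`) simulates `Rall` (with constant set `Call`) on `a`. -/
def SimulatesOn {S : Type} {ar : S → ℕ}
    (R1 Rall : Set (XRule S ar (Set (GTerm S ar))))
    (C1 Call : Set (Set (GTerm S ar))) (a : Set (GTerm S ar)) : Prop :=
  a ∈ C1 ∧ ∀ b ∈ Call, ReachesPE Rall a b → KeepsUp R1 Rall C1 b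

/-- `R⟨E,F⟩` and `R⟨F,E⟩` together simulate `R⟨E∪F,∅⟩`. -/
def TogetherSim {S : Type} {ar : S → ℕ}
    (E F : Set (GTerm S ar × GTerm S ar)) : Prop :=
  ∀ a ∈ CCl (E ∪ F) (STSet (E ∪ F)),
    SimulatesOn (RRsys E (STSet (E ∪ F))) (RRsys (E ∪ F) (STSet (E ∪ F)))
      (CCl E (STSet (E ∪ F))) (CCl (E ∪ F) (STSet (E ∪ F))) a ∨
    SimulatesOn (RRsys F (STSet (E ∪ F))) (RRsys (E ∪ F) (STSet (E ∪ F)))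
      (CCl F (STSet (E ∪ F))) (CCl (E ∪ F) (STSet (E ∪ F))) a

section AuxLemmas

variable {S : Type} {ar : S → ℕ}

/-- Occurrence of a constant `b` in an extended term. -/
inductive OccX {C : Type} (b : C) : XTerm S ar C → Prop
  | here : OccX b (XTerm.const b)
  | node {σ : S} {f : Fin (ar σ) → XTerm S ar C} (i : Fin (ar σ)) :
      OccX b (f i) → OccX b (XTerm.node σ f)

/-- All rules have a left-hand side `σ(consts)` and a constant right-hand side. -/
def Shaped (R : Set (XRule S ar (Set (GTerm S ar)))) : Prop :=
  ∀ l r, (l, r) ∈ R → ∃ (σ : S) (av : Fin (ar σ) → Set (GTerm S ar)) (c : Set (GTerm S ar)),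
    l = XTerm.node σ (fun j => XTerm.const (av j)) ∧ r = XTerm.const c

lemma shaped_RRsys (G : Set (GTerm S ar × GTerm S ar)) (W : Set (GTerm S ar)) :
    Shaped (RRsys G W) := by
  rintro l r ⟨σ, ts, hW, h⟩
  rw [Prod.ext_iff] at h
  exact ⟨σ, fun i => thCls G W (ts i), thCls G W (GTerm.node σ ts), h.1, h.2⟩

lemma rew_const {R : Set (XRule S ar (Set (GTerm S ar)))} (hR : Shaped R)
    {c : Set (GTerm S ar)} {u : XTerm S ar (Set (GTerm S ar))} :
    ¬ Rew R (XTerm.const c) u := by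
  intro h
  cases h with
  | rule hmem =>
    obtain ⟨σ, av, c', hl, _⟩ := hR _ _ hmem
    cases hl

lemma rewStar_const {R : Set (XRule S ar (Set (GTerm S ar)))} (hR : Shaped R)
    {c a : Set (GTerm S ar)}
    (h : RewStar R (XTerm.const c) (XTerm.const a)) : c = a := by
  rcases Relation.ReflTransGen.cases_head h with h | ⟨d, hd, _⟩
  · injection h with h'
  · exact absurd hd (rew_const hR)

lemma occx_step {R : Set (XRule S ar (Set (GTerm S ar)))} (hR : Shaped R)
    {s s' : XTerm S ar (Set (GTerm S ar))} (hs : Rew R s s') :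
    ∀ b, OccX b s → OccX b s' ∨ ∃ c, AuxArc R c b ∧ OccX c s' := by
  induction hs with
  | rule hmem =>
    intro b hocc
    obtain ⟨σ, av, c, hl, hr⟩ := hR _ _ hmem
    subst hl; subst hr
    right
    cases hocc with
    | node i h' =>
      cases h'
      exact ⟨c, ⟨σ, av, i, hmem, rfl⟩, OccX.here⟩
  | node i hk heq ih =>
    intro b hocc
    cases hocc with
    | node j h' =>
      by_cases hji : j = i
      · subst hji
        rcases ih b h' with h | ⟨c, harc, hc⟩
        · exact Or.inl (OccX.node j h)
        · exact Or.inr ⟨c, harc, OccX.node j hc⟩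
      · exact Or.inl (OccX.node j (heq j hji ▸ h'))

lemma reaches_to_transGen {R : Set (XRule S ar (Set (GTerm S ar)))} (hR : Shaped R)
    {a : Set (GTerm S ar)} {t : XTerm S ar (Set (GTerm S ar))}
    (hrew : RewStar R t (XTerm.const a)) :
    ∀ b, (∃ (σ : S) (f : Fin (ar σ) → XTerm S ar (Set (GTerm S ar))) (i : Fin (ar σ)),
      t = XTerm.node σ f ∧ OccX b (f i)) → Relation.TransGen (AuxArc R) a b := by
  induction hrew using Relation.ReflTransGen.head_induction_on with
  | refl =>
    rintro b ⟨σ, f, i, h, _⟩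
    cases h
  | head hstep hrest ih =>
    rintro b ⟨σ, f, i, rfl, hocc⟩
    cases hstep with
    | rule hmem =>
      obtain ⟨τ, av, c, hl, hr⟩ := hR _ _ hmem
      subst hr
      have hc : c = a := rewStar_const hR hrest
      subst hc
      injection hl with hστ hf
      subst hστ
      have hf' : f = fun j => XTerm.const (av j) := eq_of_heq hf
      subst hf'
      cases hocc with
      | here => exact Relation.TransGen.single ⟨σ, av, i, hmem, rfl⟩
    | node k hk heq =>
      by_cases hik : i = k
      · subst hik
        rcases occx_step hR hk b hocc with h | ⟨c, harc, hc⟩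
        · exact ih b ⟨σ, _, i, rfl, h⟩
        · exact (ih c ⟨σ, _, i, rfl, hc⟩).tail harc
      · exact ih b ⟨σ, _, i, rfl, heq i hik ▸ hocc⟩

lemma properExt_deep {b : Set (GTerm S ar)} {t : XTerm S ar (Set (GTerm S ar))}
    (h : ProperExt (XTerm.const b) t) :
    ∃ (σ : S) (f : Fin (ar σ) → XTerm S ar (Set (GTerm S ar))) (i : Fin (ar σ)),
      t = XTerm.node σ f ∧ OccX b (f i) := by
  induction h with
  | base i hfi _ => exact ⟨_, _, i, rfl, hfi ▸ OccX.here⟩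
  | step i hpe _ ih =>
    obtain ⟨σ', f', i', heq, hocc⟩ := ih
    exact ⟨_, _, i, rfl, heq ▸ OccX.node i' hocc⟩

lemma Subterm.trans' {s t u : GTerm S ar} (h1 : Subterm s t) (h2 : Subterm t u) :
    Subterm s u := by
  induction h2 with
  | refl => exact h1
  | node i h ih => exact Subterm.node i ih

lemma stset_closed {G : Set (GTerm S ar × GTerm S ar)} {σ : S}
    {ts : Fin (ar σ) → GTerm S ar}
    (h : GTerm.node σ ts ∈ STSet G) (i : Fin (ar σ)) : ts i ∈ STSet G := by
  obtain ⟨p, hp, hsub⟩ := h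
  have hst : Subterm (ts i) (GTerm.node σ ts) := Subterm.node i (Subterm.refl _)
  rcases hsub with h | h
  · exact ⟨p, hp, Or.inl (hst.trans' h)⟩
  · exact ⟨p, hp, Or.inr (hst.trans' h)⟩

lemma rewStar_update {C : Type} [DecidableEq C] {R : Set (XRule S ar C)} {σ : S}
    (f : Fin (ar σ) → XTerm S ar C) (i : Fin (ar σ)) {s s' : XTerm S ar C}
    (h : RewStar R s s') :
    RewStar R (XTerm.node σ (Function.update f i s))
      (XTerm.node σ (Function.update f i s')) := by
  refine Relation.ReflTransGen.lift (fun x => XTerm.node σ (Function.update f i x)) ?_ _ _ h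
  intro x y hxy
  exact Rew.node i (by simpa using hxy) (fun j hj => by simp [Function.update_of_ne hj])

lemma rewStar_node {C : Type} {R : Set (XRule S ar C)} {σ : S}
    (s : Finset (Fin (ar σ))) : ∀ (f g : Fin (ar σ) → XTerm S ar C),
    (∀ i, RewStar R (f i) (g i)) → (∀ i, i ∉ s → f i = g i) →
    RewStar R (XTerm.node σ f) (XTerm.node σ g) := by
  classical
  induction s using Finset.induction_on with
  | empty =>
    intro f g _ h
    rw [funext (fun i => h i (by simp))]
    exact Relation.ReflTransGen.refl
  | @insert a s ha ih =>
    intro f g hall hout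
    have h1 : RewStar R (XTerm.node σ f)
        (XTerm.node σ (Function.update f a (g a))) := by
      have := rewStar_update (R := R) f a (hall a)
      simpa [Function.update_eq_self] using this
    refine h1.trans (ih (Function.update f a (g a)) g ?_ ?_)
    · intro i
      by_cases h : i = a
      · subst h; simp [Function.update_self]; exact Relation.ReflTransGen.refl
      · simpa [Function.update_of_ne h] using hall i
    · intro i hi
      by_cases h : i = a
      · subst h; simp
      · rw [Function.update_of_ne h]
        exact hout i (by simp [hi, h])

lemma ground_rewStar {G : Set (GTerm S ar × GTerm S ar)} {W : Set (GTerm S ar)}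
    (hW : ∀ {σ : S} {ts : Fin (ar σ) → GTerm S ar},
      GTerm.node σ ts ∈ W → ∀ i, ts i ∈ W) :
    ∀ t : GTerm S ar, t ∈ W →
      RewStar (RRsys G W) (GTerm.toX t) (XTerm.const (thCls G W t)) := by
  intro t
  induction t with
  | node σ ts ih =>
    intro ht
    have h1 : RewStar (RRsys G W) (GTerm.toX (GTerm.node σ ts))
        (XTerm.node σ (fun i => XTerm.const (thCls G W (ts i)))) := by
      show RewStar _ (XTerm.node σ (fun i => (ts i).toX)) _
      exact rewStar_node Finset.univ _ _ (fun i => ih i (hW ht i))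
        (fun i hi => absurd (Finset.mem_univ i) hi)
    exact h1.trans (Relation.ReflTransGen.single (Rew.rule ⟨σ, ts, ht, rfl⟩))

lemma rule_inv {G : Set (GTerm S ar × GTerm S ar)} {W : Set (GTerm S ar)} {σ : S}
    {av : Fin (ar σ) → Set (GTerm S ar)} {a : Set (GTerm S ar)}
    (h : (XTerm.node σ (fun j => XTerm.const (av j)), XTerm.const a) ∈ RRsys G W) :
    ∃ ts : Fin (ar σ) → GTerm S ar, GTerm.node σ ts ∈ W ∧
      (∀ j, av j = thCls G W (ts j)) ∧ a = thCls G W (GTerm.node σ ts) := by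
  obtain ⟨τ, ts, hWm, heq⟩ := h
  rw [Prod.ext_iff] at heq
  obtain ⟨h1, h2⟩ := heq
  injection h1 with hστ hf
  subst hστ
  have hf' := eq_of_heq hf
  refine ⟨ts, hWm, fun j => ?_, by injection h2⟩
  have := congrFun hf' j
  injection this

lemma extend_reach {G : Set (GTerm S ar × GTerm S ar)} {W : Set (GTerm S ar)}
    (hW : ∀ {σ : S} {ts : Fin (ar σ) → GTerm S ar},
      GTerm.node σ ts ∈ W → ∀ i, ts i ∈ W)
    {a c b : Set (GTerm S ar)} {t : XTerm S ar (Set (GTerm S ar))}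
    (harc : AuxArc (RRsys G W) a c)
    (ht : RewStar (RRsys G W) t (XTerm.const c))
    (hpe : ProperExt (XTerm.const b) t ∨ t = XTerm.const b) :
    ∃ u, ProperExt (XTerm.const b) u ∧ RewStar (RRsys G W) u (XTerm.const a) := by
  classical
  obtain ⟨σ, av, i, hmem, havi⟩ := harc
  obtain ⟨ts, hWts, hav, ha⟩ := rule_inv hmem
  refine ⟨XTerm.node σ (fun j => if j = i then t else GTerm.toX (ts j)), ?_, ?_⟩
  · rcases hpe with hpe | rfl
    · exact ProperExt.step i (by simpa using hpe)
        (fun j hj => by simp only [if_neg hj]; exact ⟨ts j, rfl⟩)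
    · exact ProperExt.base i (by simp)
        (fun j hj => by simp only [if_neg hj]; exact ⟨ts j, rfl⟩)
  · have h1 : RewStar (RRsys G W)
        (XTerm.node σ (fun j => if j = i then t else GTerm.toX (ts j)))
        (XTerm.node σ (fun j => XTerm.const (av j))) := by
      refine rewStar_node Finset.univ _ _ (fun j => ?_)
        (fun j hj => absurd (Finset.mem_univ j) hj)
      by_cases hji : j = i
      · subst hji; simp only [if_pos rfl, havi]; exact ht
      · simp only [if_neg hji, hav j]
        exact ground_rewStar hW (ts j) (hW hWts j)
    exact h1.trans (Relation.ReflTransGen.single (Rew.rule hmem))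

end AuxLemmas
theorem stmt_19 {S : Type} [Fintype S] {ar : S → ℕ} (hconst : ∃ c : S, ar c = 0)
    (E F : Set (GTerm S ar × GTerm S ar)) (hEfin : E.Finite) (hFfin : F.Finite) :
    TogetherSim E F ↔
    ∀ a ∈ CCl (E ∪ F) (STSet (E ∪ F)),
      (a ∈ CCl E (STSet (E ∪ F)) ∧
        ∀ b ∈ CCl (E ∪ F) (STSet (E ∪ F)),
          Relation.TransGen (AuxArc (RRsys (E ∪ F) (STSet (E ∪ F)))) a b →
          KeepsUp (RRsys E (STSet (E ∪ F))) (RRsys (E ∪ F) (STSet (E ∪ F)))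
            (CCl E (STSet (E ∪ F))) b) ∨
      (a ∈ CCl F (STSet (E ∪ F)) ∧
        ∀ b ∈ CCl (E ∪ F) (STSet (E ∪ F)),
          Relation.TransGen (AuxArc (RRsys (E ∪ F) (STSet (E ∪ F)))) a b →
          KeepsUp (RRsys F (STSet (E ∪ F))) (RRsys (E ∪ F) (STSet (E ∪ F)))
            (CCl F (STSet (E ∪ F))) b) := by
  have hW : ∀ {σ : S} {ts : Fin (ar σ) → GTerm S ar},
      GTerm.node σ ts ∈ STSet (E ∪ F) → ∀ i, ts i ∈ STSet (E ∪ F) :=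
    fun h i => stset_closed h i
  have hR : Shaped (RRsys (E ∪ F) (STSet (E ∪ F))) := shaped_RRsys _ _
  have key : ∀ a b : Set (GTerm S ar),
      ReachesPE (RRsys (E ∪ F) (STSet (E ∪ F))) a b ↔
      Relation.TransGen (AuxArc (RRsys (E ∪ F) (STSet (E ∪ F)))) a b := by
    intro a b
    constructor
    · rintro ⟨t, hpe, hrew⟩
      exact reaches_to_transGen hR hrew b (properExt_deep hpe)
    · intro htg
      induction htg using Relation.TransGen.head_induction_on with
      | single harc =>
        exact extend_reach hW harc Relation.ReflTransGen.refl (Or.inr rfl)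
      | head harc _ ih =>
        obtain ⟨t, hpe, hr⟩ := ih
        exact extend_reach hW harc hr (Or.inl hpe)
  constructor
  · intro h a ha
    rcases h a ha with ⟨h1, h2⟩ | ⟨h1, h2⟩
    · exact Or.inl ⟨h1, fun b hb htg => h2 b hb ((key a b).mpr htg)⟩
    · exact Or.inr ⟨h1, fun b hb htg => h2 b hb ((key a b).mpr htg)⟩
  · intro h a ha
    rcases h a ha with ⟨h1, h2⟩ | ⟨h1, h2⟩
    · exact Or.inl ⟨h1, fun b hb hre => h2 b hb ((key a b).mp hre)⟩
    · exact Or.inr ⟨h1, fun b hb hre => h2 b hb ((key a b).mp hre)⟩
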